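/- Let G be a finite abelian p-group and U a subgroup of order p. Let C(G) = { V ≤ G | V cyclic, U ≤ V, (V:U) = p }. Then the following are equivalent: (i) |C(G)| = 1; (ii) |C(G)| ≢ 0 (mod p); (iii) G is cyclic. (Assume |G| ≥ p^2.) -/

import Mathlib

open Subgroup Finset

lemma card_filter_mem {G : Type*} [Group G] [Fintype G] (H : Subgroup G)
    [DecidablePred (· ∈ H)] : #(Finset.univ.filter (· ∈ H)) = Nat.card H := by
  rw [Nat.card_eq_fintype_card, Fintype.card_subtype]

lemma zpowers_isCyclic {G : Type*} [Group G] (x : G) : IsCyclic (Subgroup.zpowers x) :=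
  ⟨⟨⟨x, Subgroup.mem_zpowers x⟩, fun y => by
    obtain ⟨k, hk⟩ := y.2
    exact ⟨k, Subtype.ext (by simpa using hk)⟩⟩⟩

lemma relindex_card_eq {G : Type*} [Group G] [Finite G] {U V : Subgroup G} (h : U ≤ V) :
    Nat.card V = U.relIndex V * Nat.card U := by
  rw [Subgroup.relIndex, Subgroup.index_eq_card,
    ← Nat.card_congr (Subgroup.subgroupOfEquivOfLe h).toEquiv]
  exact Subgroup.card_eq_card_quotient_mul_card_subgroup _

lemma card_ker_pow_eq {H : Type*} [CommGroup H] [Fintype H] [DecidableEq H] (m : ℕ) :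
    Nat.card ((powMonoidHom m : H →* H).ker) = #(Finset.univ.filter fun a : H => a ^ m = 1) := by
  rw [Nat.card_eq_fintype_card, Fintype.card_subtype]
  congr 1; ext a; simp [MonoidHom.mem_ker]

lemma card_pker_le_of_cyclic {H : Type*} [CommGroup H] [Finite H] [IsCyclic H] {p : ℕ}
    (hp : 0 < p) : Nat.card ((powMonoidHom p : H →* H).ker) ≤ p := by
  classical
  cases nonempty_fintype H
  rw [card_ker_pow_eq]
  exact IsCyclic.card_pow_eq_one_le hp

lemma aux_isCyclic {G : Type*} [CommGroup G] [Finite G] {p : ℕ} (hp : p.Prime)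
    (hG : IsPGroup p G) (hE : Nat.card ((powMonoidHom p : G →* G).ker) ≤ p) : IsCyclic G := by
  classical
  cases nonempty_fintype G
  have key : ∀ v : ℕ, Nat.card ((powMonoidHom (p ^ v) : G →* G).ker) ≤ p ^ v := by
    intro v
    induction v with
    | zero =>
      have : ((powMonoidHom (p ^ 0) : G →* G).ker) = ⊥ := by
        ext x; simp [MonoidHom.mem_ker]
      rw [this, Subgroup.card_bot, pow_zero]
    | succ v ih =>
      set T := ((powMonoidHom (p ^ (v + 1)) : G →* G).ker) with hT
      set f : T →* G := (powMonoidHom p).comp T.subtype with hf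
      have hrange : f.range ≤ ((powMonoidHom (p ^ v) : G →* G).ker) := by
        rintro _ ⟨x, rfl⟩
        have hx : (x : G) ^ p ^ (v + 1) = 1 := x.2
        simp only [MonoidHom.mem_ker, hf, MonoidHom.comp_apply, powMonoidHom_apply,
          Subgroup.coe_subtype, ← pow_mul]
        rw [show p * p ^ v = p ^ (v + 1) by ring]
        exact hx
      have hker : Nat.card f.ker ≤ Nat.card ((powMonoidHom p : G →* G).ker) := by
        have hinj : Function.Injective
            (fun a : f.ker => (⟨(a.1 : G), by
              have h2 : f a.1 = 1 := a.2
              simpa [MonoidHom.mem_ker, hf] using h2⟩ :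
              ((powMonoidHom p : G →* G).ker))) := by
          intro a b h
          have : ((a.1 : G)) = ((b.1 : G)) := by
            simpa using Subtype.ext_iff.mp h
          exact Subtype.ext (Subtype.ext this)
        exact Nat.card_le_card_of_injective _ hinj
      calc Nat.card T = Nat.card (T ⧸ f.ker) * Nat.card f.ker :=
            Subgroup.card_eq_card_quotient_mul_card_subgroup _
        _ = Nat.card f.range * Nat.card f.ker := by
            rw [Nat.card_congr (QuotientGroup.quotientKerEquivRange f).toEquiv]
        _ ≤ p ^ v * p :=
            Nat.mul_le_mul (le_trans (Subgroup.card_le_of_le hrange) ih) (le_trans hker hE)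
        _ = p ^ (v + 1) := by ring
  apply isCyclic_of_card_pow_eq_one_le
  intro n hn
  set v := n.factorization p with hv
  have hdvd : p ^ v ∣ n := Nat.ordProj_dvd n p
  have hsub : (Finset.univ.filter fun a : G => a ^ n = 1) ⊆
      (Finset.univ.filter fun a : G => a ^ (p ^ v) = 1) := by
    intro a ha
    simp only [Finset.mem_filter, Finset.mem_univ, true_and] at ha ⊢
    obtain ⟨k, hk⟩ := hG a
    have h1 : orderOf a ∣ p ^ k := orderOf_dvd_of_pow_eq_one hk
    obtain ⟨i, hik, hoi⟩ := (Nat.dvd_prime_pow hp).mp h1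
    have h2 : orderOf a ∣ n := orderOf_dvd_of_pow_eq_one ha
    have h3 : p ^ i ∣ n := hoi ▸ h2
    have h4 : i ≤ v := (Nat.Prime.pow_dvd_iff_le_factorization hp hn.ne').mp h3
    exact orderOf_dvd_iff_pow_eq_one.mp (hoi ▸ pow_dvd_pow p h4)
  calc #(Finset.univ.filter fun a : G => a ^ n = 1)
      ≤ #(Finset.univ.filter fun a : G => a ^ (p ^ v) = 1) := Finset.card_le_card hsub
    _ = Nat.card ((powMonoidHom (p ^ v) : G →* G).ker) := (card_ker_pow_eq _).symm
    _ ≤ p ^ v := key v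
    _ ≤ n := Nat.le_of_dvd hn hdvd

lemma master {G : Type*} [CommGroup G] [Finite G] {p : ℕ}
    (hp : p.Prime) (hG : IsPGroup p G) (U : Subgroup G)
    (hU : Nat.card U = p) (hbig : p ^ 2 ∣ Nat.card G) :
    (IsCyclic G → Nat.card {V : Subgroup G | IsCyclic ↥V ∧ U ≤ V ∧ U.relIndex V = p} = 1) ∧
    (¬ IsCyclic G → p ∣ Nat.card {V : Subgroup G | IsCyclic ↥V ∧ U ≤ V ∧ U.relIndex V = p}) := by
  classical
  cases nonempty_fintype G
  set φ : G →* G := powMonoidHom p with hφ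
  set S : Subgroup G := U.comap φ with hS
  set E : Subgroup G := φ.ker with hE
  have hpU : ∀ u : G, u ∈ U → u ^ p = 1 := by
    intro u hu
    have h1 : (⟨u, hu⟩ : U) ^ Nat.card U = 1 := pow_card_eq_one'
    rw [hU] at h1
    simpa using Subtype.ext_iff.mp h1
  have hUE : U ≤ E := fun u hu => by
    simp only [hE, MonoidHom.mem_ker, hφ, powMonoidHom_apply]
    exact hpU u hu
  have hES : E ≤ S := fun x hx => by
    have : x ^ p = 1 := hx
    simp only [hS, Subgroup.mem_comap, hφ, powMonoidHom_apply, this]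
    exact U.one_mem
  have hUS : U ≤ S := hUE.trans hES
  -- the restricted p-th power hom S → U
  set ψ : S →* U := MonoidHom.codRestrict (φ.comp S.subtype) U
    (fun x => Subgroup.mem_comap.mp x.2) with hψ
  set k : ℕ := Nat.card ψ.range with hk
  have hkdvd : k ∣ p := by
    rw [hk, ← hU]
    exact Subgroup.card_subgroup_dvd_card ψ.range
  have hkerψ : ψ.ker = E.subgroupOf S := by
    ext x
    simp [hψ, MonoidHom.mem_ker, Subgroup.mem_subgroupOf, hE, Subtype.ext_iff]
  have hcardS : Nat.card S = k * Nat.card E := by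
    calc Nat.card S = Nat.card (S ⧸ ψ.ker) * Nat.card ψ.ker :=
          Subgroup.card_eq_card_quotient_mul_card_subgroup _
      _ = k * Nat.card E := by
          rw [Nat.card_congr (QuotientGroup.quotientKerEquivRange ψ).toEquiv, hkerψ,
            Nat.card_congr (Subgroup.subgroupOfEquivOfLe hES).toEquiv]
  -- finsets
  set Cfin : Finset (Subgroup G) :=
    Finset.univ.filter (fun V : Subgroup G => IsCyclic ↥V ∧ U ≤ V ∧ U.relIndex V = p) with hCfin
  have hCcard : Nat.card {V : Subgroup G | IsCyclic ↥V ∧ U ≤ V ∧ U.relIndex V = p}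
      = Cfin.card := by
    rw [hCfin, ← Nat.card_eq_finsetCard]
    simp
    convert (Fintype.card_subtype _).symm
  set Xfin : Finset G := Finset.univ.filter (fun x : G => x ∈ S ∧ x ∉ E) with hXfin
  -- facts about members of Cfin
  have hVfact : ∀ V : Subgroup G, V ∈ Cfin →
      Nat.card V = p ^ 2 ∧ E ⊓ V = U := by
    intro V hV
    rw [hCfin, Finset.mem_filter] at hV
    obtain ⟨-, hVc, hUV, hVrel⟩ := hV
    have hcardV : Nat.card V = p ^ 2 := by
      rw [relindex_card_eq hUV, hVrel, hU]; ring
    refine ⟨hcardV, ?_⟩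
    have hle : U ≤ E ⊓ V := le_inf hUE hUV
    have hsub : (E ⊓ V).subgroupOf V = (powMonoidHom p : V →* V).ker := by
      ext x
      simp only [Subgroup.mem_subgroupOf, Subgroup.mem_inf, MonoidHom.mem_ker,
        powMonoidHom_apply, hE]
      constructor
      · rintro ⟨h1, -⟩
        exact Subtype.ext (by have h1' : (x : G) ^ p = 1 := h1; simpa using h1')
      · intro h1
        have hxp : (x : G) ^ p = 1 := by simpa using Subtype.ext_iff.mp h1
        exact ⟨hxp, x.2⟩
    have hcardinf : Nat.card (E ⊓ V : Subgroup G) ≤ p := by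
      haveI := hVc
      rw [← Nat.card_congr (Subgroup.subgroupOfEquivOfLe (inf_le_right :
        E ⊓ V ≤ V)).toEquiv, hsub]
      exact card_pker_le_of_cyclic hp.pos
    exact (Subgroup.eq_of_le_of_card_ge hle (by rw [hU]; exact hcardinf)).symm
  -- membership of the fiber map
  have hmem : ∀ x ∈ Xfin, Subgroup.zpowers x ∈ Cfin := by
    intro x hx
    rw [hXfin, Finset.mem_filter] at hx
    obtain ⟨-, hxS, hxE⟩ := hx
    have hxpU : x ^ p ∈ U := Subgroup.mem_comap.mp hxS
    have hxp1 : x ^ p ≠ 1 := fun h => hxE h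
    have hord : orderOf x = p ^ 2 := by
      have h1 : x ^ p ^ 2 = 1 := by
        rw [pow_two, pow_mul]
        exact hpU _ hxpU
      obtain ⟨i, hi2, hoi⟩ := (Nat.dvd_prime_pow hp).mp (orderOf_dvd_of_pow_eq_one h1)
      interval_cases i
      · exfalso; apply hxp1
        have : orderOf x = 1 := by simpa using hoi
        simp [orderOf_eq_one_iff.mp this]
      · exfalso; apply hxp1
        rw [← pow_one p, ← hoi]
        exact pow_orderOf_eq_one x
      · exact hoi
    have hordxp : orderOf (x ^ p) = p := by
      rw [orderOf_pow' x hp.pos.ne', hord, Nat.gcd_eq_right (dvd_pow_self p two_ne_zero),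
        pow_two, Nat.mul_div_cancel _ hp.pos]
    have hUzp : Subgroup.zpowers (x ^ p) = U :=
      Subgroup.eq_of_le_of_card_ge (Subgroup.zpowers_le_of_mem hxpU)
        (by rw [hU, Nat.card_zpowers, hordxp])
    have hUle : U ≤ Subgroup.zpowers x := by
      rw [← hUzp]
      exact Subgroup.zpowers_le_of_mem (Subgroup.npow_mem_zpowers x p)
    have hrel : U.relIndex (Subgroup.zpowers x) = p := by
      have h2 := relindex_card_eq hUle
      rw [Nat.card_zpowers, hord, hU] at h2
      have h3 : U.relIndex (Subgroup.zpowers x) * p = p * p := by rw [← h2, pow_two]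
      exact Nat.eq_of_mul_eq_mul_right hp.pos h3
    rw [hCfin, Finset.mem_filter]
    exact ⟨Finset.mem_univ _, zpowers_isCyclic x, hUle, hrel⟩
  -- order of elements of S \ E
  have hordfact : ∀ x : G, x ∈ S → x ∉ E → orderOf x = p ^ 2 := by
    intro x hxS hxE
    have hxpU : x ^ p ∈ U := Subgroup.mem_comap.mp hxS
    have hxp1 : x ^ p ≠ 1 := fun h => hxE h
    have h1 : x ^ p ^ 2 = 1 := by
      rw [pow_two, pow_mul]
      exact hpU _ hxpU
    obtain ⟨i, hi2, hoi⟩ := (Nat.dvd_prime_pow hp).mp (orderOf_dvd_of_pow_eq_one h1)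
    interval_cases i
    · exfalso; apply hxp1
      have : orderOf x = 1 := by simpa using hoi
      simp [orderOf_eq_one_iff.mp this]
    · exfalso; apply hxp1
      rw [← pow_one p, ← hoi]
      exact pow_orderOf_eq_one x
    · exact hoi
  -- fibers
  have hfiber : ∀ V ∈ Cfin, Xfin.filter (fun x => Subgroup.zpowers x = V)
      = (Finset.univ.filter (· ∈ V)) \ (Finset.univ.filter (· ∈ U)) := by
    intro V hV
    obtain ⟨hcardV, hEV⟩ := hVfact V hV
    rw [hCfin, Finset.mem_filter] at hV
    obtain ⟨-, hVc, hUV, hVrel⟩ := hV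
    ext x
    simp only [Finset.mem_filter, Finset.mem_sdiff, Finset.mem_univ, true_and, hXfin]
    constructor
    · rintro ⟨⟨hxS, hxE⟩, hzx⟩
      exact ⟨hzx ▸ Subgroup.mem_zpowers x, fun hxU => hxE (hUE hxU)⟩
    · rintro ⟨hxV, hxU⟩
      have hxE : x ∉ E := fun hxE =>
        hxU (hEV ▸ Subgroup.mem_inf.mpr ⟨hxE, hxV⟩)
      have hxS : x ∈ S := by
        have h1 : x ^ p ∈ E := by
          have h2 : (⟨x, hxV⟩ : V) ^ Nat.card V = 1 := pow_card_eq_one'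
          rw [hcardV] at h2
          have h3 : x ^ p ^ 2 = 1 := by simpa using Subtype.ext_iff.mp h2
          show (x ^ p) ^ p = 1
          rw [← pow_mul, ← pow_two]
          exact h3
        have h2 : x ^ p ∈ U := hEV ▸ Subgroup.mem_inf.mpr ⟨h1, V.pow_mem hxV p⟩
        exact Subgroup.mem_comap.mpr h2
      refine ⟨⟨hxS, hxE⟩, ?_⟩
      apply Subgroup.eq_of_le_of_card_ge (Subgroup.zpowers_le_of_mem hxV)
      rw [hcardV, Nat.card_zpowers, hordfact x hxS hxE]
  -- counting X two ways
  have hsubUV : ∀ H K : Subgroup G, H ≤ K →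
      (Finset.univ.filter (· ∈ H)) ⊆ (Finset.univ.filter (· ∈ K)) := by
    intro H K hHK x hx
    rw [Finset.mem_filter] at hx ⊢
    exact ⟨hx.1, hHK hx.2⟩
  have hXcard1 : Xfin.card = Cfin.card * (p ^ 2 - p) := by
    rw [Finset.card_eq_sum_card_fiberwise hmem]
    rw [Finset.sum_congr rfl (fun V hV => ?_), Finset.sum_const, smul_eq_mul]
    rw [hfiber V hV, Finset.card_sdiff_of_subset (by
        rw [hCfin, Finset.mem_filter] at hV
        exact hsubUV U V hV.2.2.1),
      card_filter_mem, card_filter_mem, (hVfact V hV).1, hU]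
  have hXcard2 : Xfin.card = k * Nat.card E - Nat.card E := by
    have hsplit := Finset.card_filter_add_card_filter_not
      (s := Finset.univ.filter (· ∈ S)) (p := (· ∈ E))
    have he1 : (Finset.univ.filter (· ∈ S)).filter (· ∈ E) = Finset.univ.filter (· ∈ E) := by
      ext x
      simp only [Finset.mem_filter, Finset.mem_univ, true_and]
      exact ⟨fun h => h.2, fun h => ⟨hES h, h⟩⟩
    have he2 : (Finset.univ.filter (· ∈ S)).filter (fun x => ¬ x ∈ E) = Xfin := by
      ext x
      simp only [hXfin, Finset.mem_filter, Finset.mem_univ, true_and]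
    rw [he1, he2, card_filter_mem, card_filter_mem, hcardS] at hsplit
    omega
  have hmain : Cfin.card * (p ^ 2 - p) = k * Nat.card E - Nat.card E := by
    rw [← hXcard1, hXcard2]
  have hms : ∀ a b : ℕ, b * a - a = a * (b - 1) := by
    intro a b
    cases b with
    | zero => simp
    | succ c => rw [Nat.succ_sub_one, add_mul, one_mul, Nat.add_sub_cancel, mul_comm]
  have hp1pos : 0 < p - 1 := by have := hp.two_le; omega
  have hppos : 0 < p ^ 2 - p := by
    have h2 := hp.two_le
    have : p < p ^ 2 := by nlinarith
    omega
  haveI : Fact p.Prime := ⟨hp⟩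
  constructor
  · -- cyclic case
    intro hcyc
    haveI := hcyc
    have he_le : Nat.card E ≤ p := card_pker_le_of_cyclic hp.pos
    have he : Nat.card E = p := le_antisymm he_le (hU ▸ Subgroup.card_le_of_le hUE)
    have hEU : U = E := Subgroup.eq_of_le_of_card_ge hUE (by rw [he, hU])
    obtain ⟨g, hg⟩ := IsCyclic.exists_generator (α := G)
    have hordg : orderOf g = Nat.card G := orderOf_eq_card_of_forall_mem_zpowers hg
    obtain ⟨n, hn⟩ := IsPGroup.iff_card.mp hG
    have hn2 : 2 ≤ n := (Nat.pow_dvd_pow_iff_le_right hp.one_lt).mp (hn ▸ hbig)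
    set y : G := g ^ p ^ (n - 2) with hy
    have hordy : orderOf y = p ^ 2 := by
      rw [hy, orderOf_pow' g (pow_ne_zero _ hp.pos.ne'), hordg, hn,
        Nat.gcd_eq_right (pow_dvd_pow p (by omega)),
        Nat.pow_div (by omega) hp.pos]
      congr 1
      omega
    have hyE : y ∉ E := by
      intro h
      have h1 : y ^ p = 1 := h
      have h2 : p ^ 2 ∣ p := hordy ▸ orderOf_dvd_of_pow_eq_one h1
      have h3 := Nat.le_of_dvd hp.pos h2
      have h4 := hp.two_le
      nlinarith
    have hyS : y ∈ S := by
      have h1 : y ^ p ∈ E := by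
        show φ (y ^ p) = 1
        simp only [hφ, powMonoidHom_apply, ← pow_mul, ← pow_two]
        rw [← hordy]
        exact pow_orderOf_eq_one y
      exact Subgroup.mem_comap.mpr (hEU ▸ h1 : y ^ p ∈ U)
    have hk1 : k ≠ 1 := by
      intro h1
      rw [h1, one_mul] at hcardS
      have hSE : E = S := Subgroup.eq_of_le_of_card_ge hES (le_of_eq hcardS)
      exact hyE (hSE ▸ hyS)
    have hkp : k = p := (hp.eq_one_or_self_of_dvd k hkdvd).resolve_left hk1
    rw [hkp, he] at hmain
    have hmain2 : Cfin.card * (p ^ 2 - p) = 1 * (p ^ 2 - p) := by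
      rw [hmain, one_mul, pow_two]
    rw [hCcard]
    exact Nat.eq_of_mul_eq_mul_right hppos hmain2
  · -- non-cyclic case
    intro hnc
    rcases (hp.eq_one_or_self_of_dvd k hkdvd) with hk1 | hkp
    · rw [hk1, one_mul, Nat.sub_self] at hmain
      have : Cfin.card = 0 := by
        rcases Nat.mul_eq_zero.mp hmain with h | h
        · exact h
        · omega
      rw [hCcard, this]
      exact dvd_zero p
    · -- k = p
      have he_gt : p < Nat.card E := by
        by_contra h
        push_neg at h
        exact hnc (aux_isCyclic hp hG h)
      obtain ⟨n, hn⟩ := IsPGroup.iff_card.mp hG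
      obtain ⟨j, hjn, hj⟩ := (Nat.dvd_prime_pow hp).mp
        (hn ▸ Subgroup.card_subgroup_dvd_card E)
      have hj2 : 2 ≤ j := by
        have h1 : p ^ 1 < p ^ j := by rw [pow_one]; exact hj ▸ he_gt
        have h2 := (Nat.pow_lt_pow_iff_right hp.one_lt).mp h1
        omega
      have hcp : Cfin.card * p = p ^ j := by
        rw [hkp, hj] at hmain
        have h1 : Cfin.card * (p ^ 2 - p) = p ^ j * (p - 1) := by
          rw [hmain, hms]
        have h2 : p ^ 2 - p = p * (p - 1) := by
          rw [pow_two, hms]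
        rw [h2, ← mul_assoc] at h1
        exact Nat.eq_of_mul_eq_mul_right hp1pos h1
      have hcc : Cfin.card = p ^ (j - 1) := by
        have : Cfin.card * p = p ^ (j - 1) * p := by
          rw [hcp, ← pow_succ]
          congr 1
          omega
        exact Nat.eq_of_mul_eq_mul_right hp.pos this
      rw [hCcard, hcc]
      exact dvd_pow_self p (by omega)

theorem artin_stmt6 {G : Type*} [CommGroup G] [Finite G] {p : ℕ}
    (hp : p.Prime) (hG : IsPGroup p G) (U : Subgroup G)
    (hU : Nat.card U = p) (hbig : p ^ 2 ∣ Nat.card G) :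
    ((Nat.card {V : Subgroup G | IsCyclic ↥V ∧ U ≤ V ∧ U.relIndex V = p} = 1 ↔
        ¬ p ∣ Nat.card {V : Subgroup G | IsCyclic ↥V ∧ U ≤ V ∧ U.relIndex V = p}) ∧
      (¬ p ∣ Nat.card {V : Subgroup G | IsCyclic ↥V ∧ U ≤ V ∧ U.relIndex V = p} ↔
        IsCyclic G)) := by
  obtain ⟨h1, h2⟩ := master hp hG U hU hbig
  by_cases hcyc : IsCyclic G
  · have hc := h1 hcyc
    refine ⟨⟨fun h => ?_, fun _ => hc⟩, ⟨fun _ => hcyc, fun _ => ?_⟩⟩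
    · rw [h]; exact hp.not_dvd_one
    · rw [hc]; exact hp.not_dvd_one
  · have hd := h2 hcyc
    refine ⟨⟨fun h => ?_, fun h => absurd hd h⟩, ⟨fun h => absurd hd h, fun h => absurd h hcyc⟩⟩
    rw [h] at hd
    exact absurd hd hp.not_dvd_one
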